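/- Global existence of the reverse Loewner flow started in the upper half-plane: Let V : [0,∞) → ℝ be continuous and let z ∈ ℍ = {w ∈ ℂ : Im w > 0}. Then there exists a unique function h : [0,∞) → ℂ with h(0) = z such that h(s) − V(s) ≠ 0 and h'(s) = −2/(h(s) − V(s)) for all s ≥ 0. Moreover, for this solution the function s ↦ Im h(s) is nondecreasing; in particular Im h(s) ≥ Im z > 0 for all s ≥ 0. -/

import Mathlib

open Set Complex

noncomputable def lU (V : ℝ → ℝ) (b : ℝ) (t : ℝ) (w : ℂ) : ℂ :=
  ((w.re - V (max t 0) : ℝ) : ℂ) + (max w.im b : ℝ) * Complex.I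

noncomputable def lF (V : ℝ → ℝ) (b : ℝ) (t : ℝ) (w : ℂ) : ℂ := -2 / lU V b t w

lemma lU_re (V : ℝ → ℝ) (b t : ℝ) (w : ℂ) : (lU V b t w).re = w.re - V (max t 0) := by
  simp [lU]

lemma lU_im (V : ℝ → ℝ) (b t : ℝ) (w : ℂ) : (lU V b t w).im = max w.im b := by
  simp [lU]

lemma lU_norm_ge (V : ℝ → ℝ) {b : ℝ} (hb : 0 < b) (t : ℝ) (w : ℂ) : b ≤ ‖lU V b t w‖ := by
  have h1 : b ≤ (lU V b t w).im := by rw [lU_im]; exact le_max_right _ _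
  calc b ≤ (lU V b t w).im := h1
    _ ≤ |(lU V b t w).im| := le_abs_self _
    _ ≤ ‖lU V b t w‖ := Complex.abs_im_le_norm _
    _ = ‖lU V b t w‖ := rfl

lemma lU_ne_zero (V : ℝ → ℝ) {b : ℝ} (hb : 0 < b) (t : ℝ) (w : ℂ) : lU V b t w ≠ 0 := by
  intro h
  have := lU_norm_ge V hb t w
  rw [h] at this; simp at this; linarith

lemma lU_sub_norm (V : ℝ → ℝ) (b t : ℝ) (w w' : ℂ) :
    ‖lU V b t w - lU V b t w'‖ ≤ ‖w - w'‖ := by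
  have he : lU V b t w - lU V b t w' =
      ((w.re - w'.re : ℝ) : ℂ) + ((max w.im b - max w'.im b : ℝ)) * Complex.I := by
    simp only [lU]; push_cast; ring
  rw [he, Complex.norm_add_mul_I]
  have h2 : ‖w - w'‖ = Real.sqrt ((w.re - w'.re)^2 + (w.im - w'.im)^2) := by
    rw [Complex.norm_def, Complex.normSq_apply]
    simp [Complex.sub_re, Complex.sub_im]; ring_nf
  rw [h2]
  apply Real.sqrt_le_sqrt
  have := abs_max_sub_max_le_abs w.im w'.im b
  have h3 : (max w.im b - max w'.im b)^2 ≤ (w.im - w'.im)^2 := by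
    rw [← _root_.sq_abs (max w.im b - max w'.im b), ← _root_.sq_abs (w.im - w'.im)]
    exact pow_le_pow_left₀ (abs_nonneg _) this 2
  linarith

lemma lF_lipschitz (V : ℝ → ℝ) {b : ℝ} (hb : 0 < b) (t : ℝ) :
    LipschitzWith (Real.toNNReal (2/b^2)) (lF V b t) := by
  apply LipschitzWith.of_dist_le_mul
  intro w w'
  rw [dist_eq_norm, dist_eq_norm]
  set u := lU V b t w with hu
  set u' := lU V b t w' with hu'
  have hu0 : u ≠ 0 := lU_ne_zero V hb t w
  have hu'0 : u' ≠ 0 := lU_ne_zero V hb t w'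
  have he : lF V b t w - lF V b t w' = 2 * (u - u') / (u * u') := by
    simp only [lF, ← hu, ← hu']
    field_simp
    ring
  rw [he]
  have hnu : b ≤ ‖u‖ := lU_norm_ge V hb t w
  have hnu' : b ≤ ‖u'‖ := lU_norm_ge V hb t w'
  have hsub : ‖u - u'‖ ≤ ‖w - w'‖ := lU_sub_norm V b t w w'
  rw [norm_div, norm_mul, norm_mul]
  have hb2 : (0:ℝ) < b * b := mul_pos hb hb
  have key : ‖(2:ℂ)‖ * ‖u - u'‖ / (‖u‖ * ‖u'‖) ≤ 2 * ‖w - w'‖ / (b * b) := by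
    apply div_le_div₀ (by positivity)
    · simp only [Complex.norm_ofNat]
      nlinarith [norm_nonneg (u - u'), norm_nonneg (w - w')]
    · exact hb2
    · exact mul_le_mul hnu hnu' (le_of_lt hb) (le_trans (le_of_lt hb) hnu)
  calc ‖(2:ℂ)‖ * ‖u - u'‖ / (‖u‖ * ‖u'‖) ≤ 2 * ‖w - w'‖ / (b * b) := key
    _ = (Real.toNNReal (2/b^2) : ℝ) * ‖w - w'‖ := by
        rw [Real.coe_toNNReal _ (by positivity), div_mul_eq_mul_div, sq]

lemma lF_norm_le (V : ℝ → ℝ) {b : ℝ} (hb : 0 < b) (t : ℝ) (w : ℂ) : ‖lF V b t w‖ ≤ 2 / b := by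
  rw [lF, norm_div]
  have := lU_norm_ge V hb t w
  calc ‖(-2 : ℂ)‖ / ‖lU V b t w‖ ≤ 2 / b := by
        rw [norm_neg, Complex.norm_ofNat]
        exact div_le_div₀ (by norm_num) le_rfl hb this
    _ = 2 / b := rfl

lemma lF_cont (V : ℝ → ℝ) (hV : ContinuousOn V (Set.Ici 0)) {b : ℝ} (hb : 0 < b) (w : ℂ) :
    Continuous (fun t => lF V b t w) := by
  have hW : Continuous (fun t : ℝ => V (max t 0)) :=
    hV.comp_continuous (continuous_id.max continuous_const) (fun x => mem_Ici.mpr (le_max_right _ _))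
  have hu : Continuous (fun t => lU V b t w) := by
    unfold lU
    continuity
  exact continuous_const.div hu (fun t => lU_ne_zero V hb t w)

lemma lF_im (V : ℝ → ℝ) {b : ℝ} (hb : 0 < b) (t : ℝ) (w : ℂ) :
    (lF V b t w).im = 2 * max w.im b / Complex.normSq (lU V b t w) := by
  rw [lF, Complex.div_im]
  simp [lU_im]
  ring

lemma lF_im_pos (V : ℝ → ℝ) {b : ℝ} (hb : 0 < b) (t : ℝ) (w : ℂ) : 0 < (lF V b t w).im := by
  rw [lF_im V hb]
  have h1 : 0 < max w.im b := lt_max_of_lt_right hb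
  have h2 : 0 < Complex.normSq (lU V b t w) := Complex.normSq_pos.mpr (lU_ne_zero V hb t w)
  positivity

lemma lF_eq (V : ℝ → ℝ) {b : ℝ} (hb : 0 < b) {t : ℝ} (ht : 0 ≤ t) {w : ℂ} (hw : b ≤ w.im) :
    lU V b t w = w - (V t : ℂ) ∧ lF V b t w = -2 / (w - (V t : ℂ)) := by
  have h1 : lU V b t w = w - (V t : ℂ) := by
    rw [lU, max_eq_left ht, max_eq_left hw]
    apply Complex.ext <;> simp
  exact ⟨h1, by rw [lF, h1]⟩

lemma mem_nhdsWithin_Ici_of_Icc {t c a : ℝ} (ht : a ≤ t) (htc : t < c) :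
    Icc a c ∈ nhdsWithin t (Ici t) :=
  mem_nhdsWithin.mpr ⟨Iio c, isOpen_Iio, htc, fun x hx => ⟨le_trans ht hx.2, le_of_lt hx.1⟩⟩

lemma mem_nhdsWithin_Ici0_of_Icc {t c : ℝ} (ht : 0 ≤ t) (htc : t < c) :
    Icc 0 c ∈ nhdsWithin t (Ici 0) :=
  mem_nhdsWithin.mpr ⟨Iio c, isOpen_Iio, htc, fun x hx => ⟨hx.2, le_of_lt hx.1⟩⟩

lemma lF_exists (V : ℝ → ℝ) (hV : ContinuousOn V (Set.Ici 0)) (hb : 0 < b) (z : ℂ) {c : ℝ} (hc : 0 < c) :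
    ∃ f : ℝ → ℂ, f 0 = z ∧ ∀ t ∈ Icc 0 c, HasDerivWithinAt f (lF V b t (f t)) (Icc 0 c) t := by
  have hpl : IsPicardLindelof (lF V b) (tmin := 0) (tmax := c) ⟨0, le_rfl, hc.le⟩ z
      (Real.toNNReal ((2/b)*c)) 0 (Real.toNNReal (2/b)) (Real.toNNReal (2/b^2)) :=
    { lipschitzOnWith := fun t _ => (lF_lipschitz V hb t).lipschitzOnWith
      continuousOn := fun x _ => (lF_cont V hV hb x).continuousOn
      norm_le := fun t _ x _ => (lF_norm_le V hb t x).trans (Real.le_coe_toNNReal _)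
      mul_max_le := by
        rw [Real.coe_toNNReal _ (by positivity), Real.coe_toNNReal _ (by positivity)]
        simp [max_eq_left hc.le] }
  exact hpl.exists_eq_forall_mem_Icc_hasDerivWithinAt₀

lemma lF_uniq (V : ℝ → ℝ) {b : ℝ} (hb : 0 < b) {c : ℝ} (hc : 0 ≤ c) {f g : ℝ → ℂ}
    (hf : ∀ t ∈ Icc 0 c, HasDerivWithinAt f (lF V b t (f t)) (Icc 0 c) t)
    (hg : ∀ t ∈ Icc 0 c, HasDerivWithinAt g (lF V b t (g t)) (Icc 0 c) t)
    (h0 : f 0 = g 0) : EqOn f g (Icc 0 c) := by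
  apply ODE_solution_unique_of_mem_Icc_right
    (v := lF V b) (s := fun _ => (univ : Set ℂ)) (K := Real.toNNReal (2/b^2))
    (fun t _ => (lF_lipschitz V hb t).lipschitzOnWith)
    (fun t ht => (hf t ht).continuousWithinAt)
    (fun t ht => (hf t (Ico_subset_Icc_self ht)).mono_of_mem_nhdsWithin
      (mem_nhdsWithin_Ici_of_Icc ht.1 ht.2))
    (fun t _ => mem_univ _)
    (fun t ht => (hg t ht).continuousWithinAt)
    (fun t ht => (hg t (Ico_subset_Icc_self ht)).mono_of_mem_nhdsWithin
      (mem_nhdsWithin_Ici_of_Icc ht.1 ht.2))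
    (fun t _ => mem_univ _) h0

lemma lF_global (V : ℝ → ℝ) (hV : ContinuousOn V (Set.Ici 0)) (hb : 0 < b) (z : ℂ) :
    ∃ h : ℝ → ℂ, h 0 = z ∧
      ∀ s ∈ Ici (0:ℝ), HasDerivWithinAt h (lF V b s (h s)) (Ici 0) s := by
  choose α hα0 hα using fun n : ℕ => lF_exists V hV hb z (c := (n:ℝ)+1) (by positivity)
  have hcons : ∀ n m : ℕ, n ≤ m → EqOn (α n) (α m) (Icc 0 ((n:ℝ)+1)) := by
    intro n m hnm
    have hsub : Icc (0:ℝ) ((n:ℝ)+1) ⊆ Icc 0 ((m:ℝ)+1) :=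
      Icc_subset_Icc le_rfl (by exact_mod_cast Nat.add_le_add_right hnm 1)
    exact lF_uniq V hb (by positivity) (hα n)
      (fun t ht => (hα m t (hsub ht)).mono hsub)
      ((hα0 n).trans (hα0 m).symm)
  set h : ℝ → ℂ := fun s => α ⌈s⌉₊ s with hh
  have key : ∀ n : ℕ, ∀ r ∈ Icc (0:ℝ) ((n:ℝ)+1), h r = α n r := by
    intro n r hr
    have hr1 : r ∈ Icc (0:ℝ) ((⌈r⌉₊:ℝ)+1) :=
      ⟨hr.1, le_trans (Nat.le_ceil r) (by linarith)⟩
    rcases le_total (⌈r⌉₊ : ℕ) n with hle | hle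
    · exact hcons _ n hle hr1
    · exact (hcons n _ hle hr).symm ▸ rfl
  refine ⟨h, by simpa [hh, Nat.ceil_zero] using hα0 0, ?_⟩
  intro s hs
  set n := ⌈s⌉₊ with hn
  have hsn : s ∈ Icc (0:ℝ) ((n:ℝ)+1) := ⟨hs, le_trans (Nat.le_ceil s) (by linarith)⟩
  have hslt : s < (n:ℝ)+1 := lt_of_le_of_lt (Nat.le_ceil s) (by linarith)
  have hd : HasDerivWithinAt h (lF V b s (h s)) (Icc 0 ((n:ℝ)+1)) s := by
    have := (hα n s hsn).congr (fun r hr => key n r hr) (key n s hsn)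
    rwa [key n s hsn]
  exact hd.mono_of_mem_nhdsWithin (mem_nhdsWithin_Ici0_of_Icc hs hslt)

lemma hasDerivWithinAt_cim {f : ℝ → ℂ} {f' : ℂ} {s : Set ℝ} {x : ℝ}
    (hf : HasDerivWithinAt f f' s x) :
    HasDerivWithinAt (fun r => (f r).im) f'.im s x := by
  exact Complex.imCLM.hasFDerivAt.comp_hasDerivWithinAt x hf

lemma neg_two_div_im (w : ℂ) : ((-2 : ℂ)/w).im = 2 * w.im / Complex.normSq w := by
  rw [Complex.div_im]
  simp
  ring


/-- **Global existence of the reverse Loewner flow started in the upper half-plane.**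
For a continuous driver `V : [0,∞) → ℝ` and `z ∈ ℍ`, there is a unique solution
`h : [0,∞) → ℂ` of `h 0 = z`, `h' s = -2/(h s - V s)` (the solution never meets the
driver); moreover `s ↦ Im (h s)` is nondecreasing, so `Im (h s) ≥ Im z > 0`. -/
theorem stmt12 (V : ℝ → ℝ) (hV : ContinuousOn V (Set.Ici 0)) (z : ℂ) (hz : 0 < z.im) :
    ∃ h : ℝ → ℂ,
      (h 0 = z ∧ ∀ s ∈ Set.Ici (0 : ℝ), h s - (V s : ℂ) ≠ 0 ∧
        HasDerivWithinAt h (-2 / (h s - (V s : ℂ))) (Set.Ici 0) s) ∧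
      (∀ h' : ℝ → ℂ,
        (h' 0 = z ∧ ∀ s ∈ Set.Ici (0 : ℝ), h' s - (V s : ℂ) ≠ 0 ∧
          HasDerivWithinAt h' (-2 / (h' s - (V s : ℂ))) (Set.Ici 0) s) →
        ∀ s ∈ Set.Ici (0 : ℝ), h' s = h s) ∧
      MonotoneOn (fun s => (h s).im) (Set.Ici 0) ∧
      ∀ s ∈ Set.Ici (0 : ℝ), z.im ≤ (h s).im := by
  set b := z.im with hbdef
  have hb : 0 < b := hz
  obtain ⟨h, h0, hdF⟩ := lF_global V hV hb z
  have him : ∀ s ∈ Ici (0:ℝ),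
      HasDerivWithinAt (fun r => (h r).im) ((lF V b s (h s)).im) (Ici 0) s :=
    fun s hs => hasDerivWithinAt_cim (hdF s hs)
  have hmono : MonotoneOn (fun s => (h s).im) (Ici 0) := by
    apply monotoneOn_of_deriv_nonneg (convex_Ici 0)
    · exact fun s hs => (him s hs).continuousWithinAt
    · intro s hs
      rw [interior_Ici] at hs
      exact ((him s (mem_Ici.mpr (le_of_lt hs))).hasDerivAt (Ici_mem_nhds hs)).differentiableAt.differentiableWithinAt
    · intro s hs
      rw [interior_Ici] at hs
      rw [((him s (mem_Ici.mpr (le_of_lt hs))).hasDerivAt (Ici_mem_nhds hs)).deriv]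
      exact (lF_im_pos V hb s (h s)).le
  have h0im : (h 0).im = b := by rw [h0]
  have hge : ∀ s ∈ Ici (0:ℝ), b ≤ (h s).im := by
    intro s hs
    simpa [h0im] using hmono self_mem_Ici hs hs
  -- the solution solves the original ODE
  have horig : ∀ s ∈ Ici (0:ℝ), h s - (V s : ℂ) ≠ 0 ∧
      HasDerivWithinAt h (-2 / (h s - (V s : ℂ))) (Ici 0) s := by
    intro s hs
    obtain ⟨hU, hF⟩ := lF_eq V hb hs (hge s hs)
    refine ⟨hU ▸ lU_ne_zero V hb s (h s), ?_⟩
    rw [← hF]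
    exact hdF s hs
  refine ⟨h, ⟨h0, horig⟩, ?_, hmono, hge⟩
  -- uniqueness
  rintro h' ⟨h'0, hode⟩ s hs
  have him' : ∀ r ∈ Ici (0:ℝ),
      HasDerivWithinAt (fun x => (h' x).im)
        (2 * (h' r).im / Complex.normSq (h' r - (V r : ℂ))) (Ici 0) r := by
    intro r hr
    have := hasDerivWithinAt_cim (hode r hr).2
    rw [neg_two_div_im] at this
    simpa [Complex.sub_im, Complex.ofReal_im, sub_zero] using this
  have claim : ∀ r ∈ Ici (0:ℝ), b ≤ (h' r).im := by
    by_contra hcon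
    push_neg at hcon
    obtain ⟨r₀, hr₀, hr₀b⟩ := hcon
    set B : Set ℝ := {r | 0 ≤ r ∧ (h' r).im < b} with hB
    have hne : B.Nonempty := ⟨r₀, hr₀, hr₀b⟩
    have hbdd : BddBelow B := ⟨0, fun x hx => hx.1⟩
    set t := sInf B with htdef
    have ht0 : 0 ≤ t := le_csInf hne fun x hx => hx.1
    have hlow : ∀ r, 0 ≤ r → r < t → b ≤ (h' r).im := by
      intro r hr hrt
      by_contra hlt
      push_neg at hlt
      exact absurd (csInf_le hbdd ⟨hr, hlt⟩) (not_le.mpr hrt)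
    have hbI : b ≤ (h' t).im := by
      rcases eq_or_lt_of_le ht0 with heq | hlt
      · rw [← heq, h'0]
      · have hmono' : MonotoneOn (fun r => (h' r).im) (Icc 0 t) := by
          apply monotoneOn_of_deriv_nonneg (convex_Icc 0 t)
          · exact fun r hr => ((him' r hr.1).continuousWithinAt).mono Icc_subset_Ici_self
          · intro r hr
            rw [interior_Icc] at hr
            exact ((him' r hr.1.le).hasDerivAt (Ici_mem_nhds hr.1)).differentiableAt.differentiableWithinAt
          · intro r hr
            rw [interior_Icc] at hr
            rw [((him' r hr.1.le).hasDerivAt (Ici_mem_nhds hr.1)).deriv]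
            have h1 : b ≤ (h' r).im := hlow r hr.1.le hr.2
            have h2 : 0 < Complex.normSq (h' r - (V r : ℂ)) :=
              Complex.normSq_pos.mpr (hode r hr.1.le).1
            apply div_nonneg _ h2.le
            nlinarith
        have := hmono' (left_mem_Icc.mpr ht0) (right_mem_Icc.mpr ht0) ht0
        simp only at this
        rw [h'0] at this
        exact this
    set d := 2 * (h' t).im / Complex.normSq (h' t - (V t : ℂ)) with hddef
    have hdpos : 0 < d := by
      have h2 : 0 < Complex.normSq (h' t - (V t : ℂ)) :=
        Complex.normSq_pos.mpr (hode t ht0).1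
      have : 0 < (h' t).im := lt_of_lt_of_le hb hbI
      positivity
    have hBsub : B ⊆ Ici 0 \ {t} := by
      intro x hx
      refine ⟨hx.1, ?_⟩
      intro hxt
      rw [Set.mem_singleton_iff] at hxt
      rw [hxt] at hx
      exact absurd hbI (not_le.mpr hx.2)
    have hnebot : (nhdsWithin t B).NeBot :=
      mem_closure_iff_nhdsWithin_neBot.mp (csInf_mem_closure hne hbdd)
    have htend : Filter.Tendsto (slope (fun r => (h' r).im) t) (nhdsWithin t B) (nhds d) :=
      (hasDerivWithinAt_iff_tendsto_slope.mp (him' t ht0)).mono_left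
        (nhdsWithin_mono t hBsub)
    have hslope : ∀ x ∈ B, slope (fun r => (h' r).im) t x ≤ 0 := by
      intro x hx
      have htx : t ≤ x := csInf_le hbdd hx
      have hne' : x ≠ t := fun hxe => (hBsub hx).2 (by simp [hxe])
      have htx' : t < x := lt_of_le_of_ne htx (Ne.symm hne')
      rw [slope_def_field]
      have hxb : (h' x).im < b := hx.2
      exact div_nonpos_of_nonpos_of_nonneg (by linarith) (by linarith)
    have : d ≤ 0 := le_of_tendsto htend (eventually_nhdsWithin_of_forall hslope)
    linarith
  -- both solve lF-ODE on Icc 0 s; conclude by uniqueness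
  have hIcc : Icc (0:ℝ) s ⊆ Ici 0 := Icc_subset_Ici_self
  have hf' : ∀ r ∈ Icc (0:ℝ) s, HasDerivWithinAt h' (lF V b r (h' r)) (Icc 0 s) r := by
    intro r hr
    rw [(lF_eq V hb hr.1 (claim r hr.1)).2]
    exact ((hode r hr.1).2).mono hIcc
  have hg' : ∀ r ∈ Icc (0:ℝ) s, HasDerivWithinAt h (lF V b r (h r)) (Icc 0 s) r := by
    intro r hr
    rw [(lF_eq V hb hr.1 (hge r hr.1)).2]
    exact ((horig r hr.1).2).mono hIcc
  exact lF_uniq V hb hs hf' hg' (h'0.trans h0.symm) (right_mem_Icc.mpr hs)
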